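/- Let p_1,…,p_d ∈ [0,1] with ∑_i p_i = 1, and let α be real with α ∈ (0,1) ∪ (2,∞). Then ∑_{i=1}^{d} p_i^α ≥ (∑_{i=1}^{d} p_i²)^{α−1}, where real powers are used with the convention 0^α = 0 (note ∑_i p_i² ∈ (0,1]). -/

import Mathlib

open Set Real Filter

/-- `x ↦ x ^ q` is convex on `(0, ∞)` when `q * (q - 1) ≥ 0`. -/
lemma convexOn_rpow_Ioi (q : ℝ) (hq : 0 ≤ q * (q - 1)) :
    ConvexOn ℝ (Set.Ioi (0 : ℝ)) (fun x : ℝ => x ^ q) := by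
  have hEq : ∀ x ∈ Set.Ioi (0 : ℝ),
      deriv (fun y : ℝ => y ^ q) =ᶠ[nhds x] fun y => q * y ^ (q - 1) := by
    intro x hx
    filter_upwards [isOpen_Ioi.mem_nhds hx] with y hy
    exact Real.deriv_rpow_const y q
  apply convexOn_of_deriv2_nonneg' (convex_Ioi 0)
  · intro x hx
    exact (Real.hasDerivAt_rpow_const (Or.inl (ne_of_gt hx))).differentiableAt.differentiableWithinAt
  · intro x hx
    have h2 : DifferentiableAt ℝ (fun y : ℝ => q * y ^ (q - 1)) x :=
      ((Real.hasDerivAt_rpow_const (p := q - 1) (Or.inl (ne_of_gt hx))).differentiableAt).const_mul q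
    exact (h2.congr_of_eventuallyEq (hEq x hx)).differentiableWithinAt
  · intro x hx
    have h1 : deriv^[2] (fun y : ℝ => y ^ q) x
        = deriv (deriv (fun y : ℝ => y ^ q)) x := by
      simp [Function.iterate_succ, Function.iterate_one]
    rw [h1, (hEq x hx).deriv_eq]
    have h3 : deriv (fun y : ℝ => q * y ^ (q - 1)) x = q * ((q - 1) * x ^ (q - 1 - 1)) := by
      rw [deriv_const_mul _ (Real.hasDerivAt_rpow_const (p := q - 1)
        (Or.inl (ne_of_gt hx))).differentiableAt]
      rw [Real.deriv_rpow_const x (q - 1)]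
    rw [h3, ← mul_assoc]
    exact mul_nonneg hq (Real.rpow_nonneg hx.le _)

/-- for a probability vector `p` and `α ∈ (0,1) ∪ (2,∞)`,
`∑ pᵢ^α ≥ (∑ pᵢ²)^{α−1}` (real powers, `0^α = 0`). -/
theorem stmt_17 (d : ℕ) (p : Fin d → ℝ) (hp : ∀ i, p i ∈ Set.Icc (0 : ℝ) 1)
    (hsum : ∑ i, p i = 1) (α : ℝ) (hα : α ∈ Set.Ioo (0 : ℝ) 1 ∪ Set.Ioi (2 : ℝ)) :
    (∑ i, (p i) ^ (2 : ℝ)) ^ (α - 1) ≤ ∑ i, (p i) ^ α := by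
  have hα0 : α ≠ 0 := by
    rcases hα with h | h
    · exact ne_of_gt h.1
    · exact ne_of_gt (lt_trans (by norm_num) h)
  have hq : 0 ≤ (α - 1) * (α - 1 - 1) := by
    rcases hα with h | h
    · have := h.1; have := h.2; nlinarith
    · have := h.out; nlinarith
  set t : Finset (Fin d) := Finset.univ.filter (fun i => 0 < p i) with ht
  have hzero : ∀ i ∈ Finset.univ, i ∉ t → p i = 0 := by
    intro i _ hi
    simp only [ht, Finset.mem_filter, Finset.mem_univ, true_and] at hi
    exact le_antisymm (not_lt.mp hi) (hp i).1
  have hw1 : ∑ i ∈ t, p i = 1 := by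
    rw [← hsum]
    exact Finset.sum_subset (Finset.filter_subset _ _)
      (fun i hi hit => hzero i hi hit)
  set f : ℝ → ℝ := fun x => x ^ (α - 1) with hf
  have hconv := convexOn_rpow_Ioi (α - 1) hq
  have hjensen := hconv.map_sum_le (t := t) (w := p) (p := p)
    (fun i hi => (hp i).1) hw1
    (fun i hi => by simpa [ht] using (Finset.mem_filter.mp hi).2)
  have hS : ∑ i ∈ t, p i • p i = ∑ i, (p i) ^ (2 : ℝ) := by
    rw [Finset.sum_subset (Finset.filter_subset _ Finset.univ)
      (fun i hi hit => by rw [hzero i hi hit]; simp [Real.zero_rpow two_ne_zero])]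
    refine Finset.sum_congr rfl fun i _ => ?_
    rw [smul_eq_mul, show (2:ℝ) = ((2:ℕ):ℝ) by norm_num, Real.rpow_natCast]
    ring
  have hRHS : ∑ i ∈ t, p i • (fun x : ℝ => x ^ (α - 1)) (p i) = ∑ i, (p i) ^ α := by
    rw [Finset.sum_subset (Finset.filter_subset _ Finset.univ)
      (fun i hi hit => by rw [hzero i hi hit]; simp [Real.zero_rpow hα0])]
    refine Finset.sum_congr rfl fun i _ => ?_
    rcases eq_or_lt_of_le (hp i).1 with h0 | h0
    · rw [← h0]; simp [Real.zero_rpow hα0]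
    · have h1 : p i * p i ^ (α - 1) = p i ^ (1 + (α - 1)) := by
        rw [Real.rpow_add h0, Real.rpow_one]
      simp only [smul_eq_mul]
      rw [h1, show (1:ℝ) + (α - 1) = α by ring]
  rw [hS, hRHS] at hjensen
  exact hjensen
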